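/- Let β ∈ ℝ, δ > 0, C₀ > 0 and s₀ ≥ 1 be real numbers, and let θ : [s₀, ∞) → (0, ∞) be differentiable with |θ'(s)/θ(s) + β/s| ≤ C₀·s^{−1−δ} for all s ≥ s₀. Then there exist θ_∞ > 0 and C₁ > 0 such that |θ(s)·s^{β} − θ_∞| ≤ C₁·θ_∞·s^{−δ} for all s ≥ s₀. -/

import Mathlib

open Set Real

private lemma exp_sub_one_abs (x : ℝ) : |Real.exp x - 1| ≤ |x| * Real.exp |x| := by
  have hprod : Real.exp (-x) * Real.exp x = 1 := by
    rw [← Real.exp_add]; simp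
  rcases le_or_gt 0 x with hx | hx
  · rw [abs_of_nonneg hx, abs_of_nonneg (by linarith [Real.one_le_exp hx])]
    nlinarith [Real.add_one_le_exp (-x), Real.exp_pos x, hprod]
  · rw [abs_of_neg hx, abs_of_nonpos (by linarith [Real.exp_lt_one_iff.mpr hx])]
    nlinarith [Real.add_one_le_exp x, Real.one_le_exp (by linarith : (0:ℝ) ≤ -x), hx]

/-- Asymptotic integration: if `θ > 0` is differentiable on `[s₀,∞)` with
`|θ'/θ + β/s| ≤ C₀ s^(-1-δ)`, then `θ(s) s^β` stays within relative distance
`C₁ s^(-δ)` of some positive constant `θ_∞`. -/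
theorem stmt12 (β δ C₀ s₀ : ℝ) (hδ : 0 < δ) (hC₀ : 0 < C₀) (hs₀ : 1 ≤ s₀)
    (θ θ' : ℝ → ℝ)
    (hpos : ∀ s ≥ s₀, 0 < θ s)
    (hderiv : ∀ s ≥ s₀, HasDerivWithinAt θ (θ' s) (Set.Ici s₀) s)
    (hbound : ∀ s ≥ s₀, |θ' s / θ s + β / s| ≤ C₀ * s ^ (-1 - δ)) :
    ∃ θ_inf > (0 : ℝ), ∃ C₁ > (0 : ℝ), ∀ s ≥ s₀,
      |θ s * s ^ β - θ_inf| ≤ C₁ * θ_inf * s ^ (-δ) := by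
  set M : ℝ := C₀ / δ with hM
  have hMpos : 0 < M := div_pos hC₀ hδ
  have hspos : ∀ s ≥ s₀, (0:ℝ) < s := fun s hs => lt_of_lt_of_le one_pos (hs₀.trans hs)
  set g : ℝ → ℝ := fun s => Real.log (θ s) + β * Real.log s with hgdef
  set g' : ℝ → ℝ := fun s => θ' s / θ s + β / s with hg'def
  -- derivative of g
  have hg : ∀ s ∈ Set.Ici s₀, HasDerivWithinAt g (g' s) (Set.Ici s₀) s := by
    intro s hs
    have hs' : s₀ ≤ s := hs
    have h1 : HasDerivWithinAt (fun t => Real.log (θ t)) (θ' s / θ s) (Set.Ici s₀) s :=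
      (hderiv s hs').log (ne_of_gt (hpos s hs'))
    have h2 : HasDerivWithinAt (fun t => β * Real.log t) (β / s) (Set.Ici s₀) s := by
      have := ((Real.hasDerivAt_log (ne_of_gt (hspos s hs'))).hasDerivWithinAt
        (s := Set.Ici s₀)).const_mul β
      simpa [div_eq_mul_inv] using this
    exact h1.add h2
  -- derivative of s ↦ M * s^(-δ)
  have hp : ∀ s ∈ Set.Ici s₀, HasDerivWithinAt (fun t : ℝ => M * t ^ (-δ))
      (-C₀ * s ^ (-1 - δ)) (Set.Ici s₀) s := by
    intro s hs
    have hs' : s ≠ 0 := ne_of_gt (hspos s hs)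
    have := ((Real.hasDerivAt_rpow_const (p := -δ) (Or.inl hs')).hasDerivWithinAt
      (s := Set.Ici s₀)).const_mul M
    have heq : M * (-δ * s ^ (-δ - 1)) = -C₀ * s ^ (-1 - δ) := by
      rw [show (-δ - 1 : ℝ) = -1 - δ by ring]
      field_simp [hM]
      rw [hM, div_mul_cancel₀ C₀ hδ.ne']; ring
    rw [heq] at this
    exact this
  set h : ℝ → ℝ := fun s => g s + M * s ^ (-δ) with hhdef
  set k : ℝ → ℝ := fun s => g s - M * s ^ (-δ) with hkdef
  have hh : ∀ s ∈ Set.Ici s₀, HasDerivWithinAt h (g' s + -C₀ * s ^ (-1 - δ)) (Set.Ici s₀) s :=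
    fun s hs => (hg s hs).add (hp s hs)
  have hk : ∀ s ∈ Set.Ici s₀, HasDerivWithinAt k (g' s - -C₀ * s ^ (-1 - δ)) (Set.Ici s₀) s :=
    fun s hs => (hg s hs).sub (hp s hs)
  have hint : interior (Set.Ici s₀) = Set.Ioi s₀ := interior_Ici
  have hsub : Set.Ioi s₀ ⊆ Set.Ici s₀ := Set.Ioi_subset_Ici_self
  have hanti : AntitoneOn h (Set.Ici s₀) := by
    apply antitoneOn_of_hasDerivWithinAt_nonpos (convex_Ici s₀)
      (fun s hs => (hh s hs).continuousWithinAt)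
      (f' := fun s => g' s + -C₀ * s ^ (-1 - δ))
    · intro x hx
      rw [hint] at hx
      exact ((hh x (hsub hx)).mono hsub).mono_of_mem_nhdsWithin
        (by rw [hint]; exact self_mem_nhdsWithin)
    · intro x hx
      rw [hint] at hx
      have hb := hbound x (le_of_lt hx)
      have := (abs_le.mp hb).2
      simp only [hg'def]; linarith
  have hmono : MonotoneOn k (Set.Ici s₀) := by
    apply monotoneOn_of_hasDerivWithinAt_nonneg (convex_Ici s₀)
      (fun s hs => (hk s hs).continuousWithinAt)
      (f' := fun s => g' s - -C₀ * s ^ (-1 - δ))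
    · intro x hx
      rw [hint] at hx
      exact ((hk x (hsub hx)).mono hsub).mono_of_mem_nhdsWithin
        (by rw [hint]; exact self_mem_nhdsWithin)
    · intro x hx
      rw [hint] at hx
      have hb := hbound x (le_of_lt hx)
      have := (abs_le.mp hb).1
      simp only [hg'def]; linarith
  have hkh : ∀ s ≥ s₀, k s ≤ h s := by
    intro s hs
    have : (0:ℝ) ≤ M * s ^ (-δ) :=
      mul_nonneg hMpos.le (Real.rpow_nonneg (hspos s hs).le _)
    simp only [hhdef, hkdef]; linarith
  -- L := inf of h over [s₀, ∞)
  set S : Set ℝ := h '' Set.Ici s₀ with hS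
  have hSne : S.Nonempty := ⟨h s₀, Set.mem_image_of_mem h Set.self_mem_Ici⟩
  have hklow : ∀ s ≥ s₀, ∀ y ∈ S, k s ≤ y := by
    rintro s hs y ⟨t, ht, rfl⟩
    rcases le_total s t with hst | hst
    · exact (hmono hs (hs.trans hst) hst).trans (hkh t (hs.trans hst))
    · exact (hkh s hs).trans (hanti ht hs hst)
  have hSbdd : BddBelow S := ⟨k s₀, fun y hy => hklow s₀ le_rfl y hy⟩
  set L : ℝ := sInf S with hL
  have hgL : ∀ s ≥ s₀, |g s - L| ≤ M * s ^ (-δ) := by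
    intro s hs
    have h1 : L ≤ h s := csInf_le hSbdd (Set.mem_image_of_mem h hs)
    have h2 : k s ≤ L := le_csInf hSne (hklow s hs)
    rw [abs_le]
    constructor
    · simp only [hhdef] at h1; linarith
    · simp only [hkdef] at h2; linarith
  -- conclude
  refine ⟨Real.exp L, Real.exp_pos L, M * Real.exp M, mul_pos hMpos (Real.exp_pos M), ?_⟩
  intro s hs
  have hsp := hspos s hs
  have hexp : θ s * s ^ β = Real.exp (g s) := by
    simp only [hgdef]
    rw [Real.rpow_def_of_pos hsp, Real.exp_add, Real.exp_log (hpos s hs), mul_comm β]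
  rw [hexp]
  have key : |Real.exp (g s) - Real.exp L| ≤ Real.exp L * (|g s - L| * Real.exp |g s - L|) := by
    have : Real.exp (g s) - Real.exp L = Real.exp L * (Real.exp (g s - L) - 1) := by
      rw [mul_sub, ← Real.exp_add]; ring_nf
    rw [this, abs_mul, abs_of_pos (Real.exp_pos L)]
    exact mul_le_mul_of_nonneg_left (exp_sub_one_abs _) (Real.exp_pos L).le
  have habs : |g s - L| ≤ M * s ^ (-δ) := hgL s hs
  have hsd1 : s ^ (-δ) ≤ 1 := by
    calc s ^ (-δ) ≤ (1:ℝ) ^ (-δ) := by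
          apply Real.rpow_le_rpow_of_nonpos one_pos (hs₀.trans hs) (by linarith)
      _ = 1 := Real.one_rpow _
  have habsM : |g s - L| ≤ M := habs.trans (by nlinarith)
  calc |Real.exp (g s) - Real.exp L|
      ≤ Real.exp L * (|g s - L| * Real.exp |g s - L|) := key
    _ ≤ Real.exp L * ((M * s ^ (-δ)) * Real.exp M) := by
        apply mul_le_mul_of_nonneg_left _ (Real.exp_pos L).le
        exact mul_le_mul habs (Real.exp_le_exp.mpr habsM) (Real.exp_pos _).le
          (by positivity)
    _ = M * Real.exp M * Real.exp L * s ^ (-δ) := by ring
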